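/- Fourier-domain criterion for invertibility under the t-product: a tensor X : ZMod n → Matrix (Fin m) (Fin m) ℝ (n ≥ 1) has a t-product inverse (i.e. there exists Y : ZMod n → Matrix (Fin m) (Fin m) ℝ with X ∗ Y = Y ∗ X = I) if and only if for every i : ZMod n the Fourier slice X̂ i is an invertible complex matrix. -/

import Mathlib

open Matrix

variable {n : ℕ}

/-- The t-product of two third-order real tensors, modeled as circular
convolution of frontal slices. -/
noncomputable def tMul [NeZero n] {a b c : ℕ}
    (X : ZMod n → Matrix (Fin a) (Fin b) ℝ) (Y : ZMod n → Matrix (Fin b) (Fin c) ℝ) :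
    ZMod n → Matrix (Fin a) (Fin c) ℝ :=
  fun k => ∑ j : ZMod n, X (k - j) * Y j

/-- The tensor transpose. -/
def tTranspose {a b : ℕ} (X : ZMod n → Matrix (Fin a) (Fin b) ℝ) :
    ZMod n → Matrix (Fin b) (Fin a) ℝ :=
  fun k => (X (-k))ᵀ

/-- The identity tensor. -/
def tId (n m : ℕ) : ZMod n → Matrix (Fin m) (Fin m) ℝ :=
  fun k => if k = 0 then 1 else 0

/-- The `i`-th Fourier slice of a third-order real tensor, regarded as a complex
matrix (unnormalized DFT along the third mode). -/
noncomputable def fourierSliceR [NeZero n] {a b : ℕ}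
    (X : ZMod n → Matrix (Fin a) (Fin b) ℝ) (i : ZMod n) : Matrix (Fin a) (Fin b) ℂ :=
  ∑ k : ZMod n,
    (Complex.exp (-2 * Real.pi * Complex.I / n)) ^ ((i * k : ZMod n).val) •
      (X k).map (Complex.ofReal)


namespace TProdAux
open Complex Finset

variable {n : ℕ} [NeZero n]

noncomputable def ww (n : ℕ) : ℂ := Complex.exp (-2 * Real.pi * Complex.I / n)

noncomputable def chi (a : ZMod n) : ℂ := ww n ^ a.val

lemma ww_pow_n : (ww n : ℂ) ^ n = 1 := by
  rw [ww, ← Complex.exp_nat_mul]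
  have hn : (n : ℂ) ≠ 0 := Nat.cast_ne_zero.mpr (NeZero.ne n)
  have h : (n : ℂ) * (-2 * Real.pi * Complex.I / n) = ((-1 : ℤ) : ℂ) * (2 * Real.pi * Complex.I) := by
    field_simp
    ring
  rw [h, Complex.exp_int_mul_two_pi_mul_I]

lemma ww_prim : IsPrimitiveRoot (ww n) n := by
  have h := Complex.isPrimitiveRoot_exp n (NeZero.ne n)
  have he : ww n = (Complex.exp (2 * Real.pi * Complex.I / n))⁻¹ := by
    rw [ww, ← Complex.exp_neg]
    ring_nf
  rw [he]
  exact h.inv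

lemma chi_add (a b : ZMod n) : chi (a + b) = chi a * chi b := by
  rw [chi, chi, chi, ← pow_add, ZMod.val_add]
  exact (pow_eq_pow_mod _ ww_pow_n).symm

lemma chi_zero : chi (0 : ZMod n) = 1 := by
  simp [chi]

lemma chi_nsmul (c : ℕ) (a : ZMod n) : chi (c • a) = chi a ^ c := by
  induction c with
  | zero => simp [chi_zero]
  | succ c ih => rw [succ_nsmul, chi_add, ih, pow_succ]

lemma chi_orth (j : ZMod n) :
    ∑ i : ZMod n, chi (i * j) = if j = 0 then (n : ℂ) else 0 := by
  split_ifs with h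
  · subst h
    simp [chi_zero, Finset.card_univ, ZMod.card]
  · have h1 : ∀ i : ZMod n, chi (i * j) = chi j ^ i.val := by
      intro i
      rw [← chi_nsmul]
      congr 1
      rw [nsmul_eq_mul]
      congr 1
      exact (ZMod.natCast_rightInverse i).symm
    have hval : j.val ≠ 0 := fun hv => h ((ZMod.val_eq_zero j).mp hv)
    have hne : chi j ≠ 1 := by
      rw [chi]
      exact ww_prim.pow_ne_one_of_pos_of_lt hval (ZMod.val_lt j)
    have hpow : chi j ^ n = 1 := by
      rw [chi, ← pow_mul, mul_comm, pow_mul, ww_pow_n, one_pow]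
    calc ∑ i : ZMod n, chi (i * j) = ∑ i : ZMod n, chi j ^ i.val := by
          exact Finset.sum_congr rfl fun i _ => h1 i
      _ = ∑ t ∈ Finset.range n, chi j ^ t := by
          refine Finset.sum_nbij' (fun a => a.val) (fun t => (t : ZMod n)) ?_ ?_ ?_ ?_ ?_
          · intro a _; exact Finset.mem_range.mpr (ZMod.val_lt a)
          · intro t _; exact Finset.mem_univ _
          · intro a _; exact ZMod.natCast_rightInverse a
          · intro t ht; exact ZMod.val_cast_of_lt (Finset.mem_range.mp ht)
          · intro a _; rfl
      _ = 0 := by rw [geom_sum_eq hne, hpow]; simp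


lemma chi_neg_mul (a : ZMod n) : chi (-a) * chi a = 1 := by
  rw [← chi_add, neg_add_cancel, chi_zero]

noncomputable def Phi {a b : ℕ} (X : ZMod n → Matrix (Fin a) (Fin b) ℂ) (i : ZMod n) :
    Matrix (Fin a) (Fin b) ℂ :=
  ∑ k : ZMod n, chi (i * k) • X k

noncomputable def Psi {a b : ℕ} (Z : ZMod n → Matrix (Fin a) (Fin b) ℂ) (k : ZMod n) :
    Matrix (Fin a) (Fin b) ℂ :=
  (n : ℂ)⁻¹ • ∑ i : ZMod n, chi (-(i * k)) • Z i

lemma ncast_ne_zero : (n : ℂ) ≠ 0 := Nat.cast_ne_zero.mpr (NeZero.ne n)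

lemma Psi_Phi {a b : ℕ} (X : ZMod n → Matrix (Fin a) (Fin b) ℂ) : Psi (Phi X) = X := by
  funext k
  rw [Psi]
  have h : ∑ i : ZMod n, chi (-(i * k)) • Phi X i = (n : ℂ) • X k := by
    simp only [Phi, Finset.smul_sum, smul_smul]
    rw [Finset.sum_comm]
    have h2 : ∀ l : ZMod n,
        ∑ i : ZMod n, (chi (-(i * k)) * chi (i * l)) • X l
          = (∑ i : ZMod n, chi (i * (l - k))) • X l := by
      intro l
      rw [← Finset.sum_smul]
      congr 1
      refine Finset.sum_congr rfl fun i _ => ?_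
      rw [← chi_add]
      congr 1
      ring
    calc ∑ l : ZMod n, ∑ i : ZMod n, (chi (-(i * k)) * chi (i * l)) • X l
        = ∑ l : ZMod n, (∑ i : ZMod n, chi (i * (l - k))) • X l :=
          Finset.sum_congr rfl fun l _ => h2 l
      _ = (n : ℂ) • X k := by
          simp only [chi_orth, sub_eq_zero, ite_smul, zero_smul]
          rw [Finset.sum_ite_eq' Finset.univ k (fun l => (n : ℂ) • X l)]
          simp
  rw [h, smul_smul, inv_mul_cancel₀ ncast_ne_zero, one_smul]

lemma Phi_Psi {a b : ℕ} (Z : ZMod n → Matrix (Fin a) (Fin b) ℂ) : Phi (Psi Z) = Z := by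
  funext i
  rw [Phi]
  simp only [Psi, smul_comm (chi _) ((n:ℂ)⁻¹), ← Finset.smul_sum]
  have h : ∑ k : ZMod n, chi (i * k) • ∑ j : ZMod n, chi (-(j * k)) • Z j
      = (n : ℂ) • Z i := by
    simp only [Finset.smul_sum, smul_smul]
    rw [Finset.sum_comm]
    have h2 : ∀ j : ZMod n,
        ∑ k : ZMod n, (chi (i * k) * chi (-(j * k))) • Z j
          = (∑ k : ZMod n, chi (k * (i - j))) • Z j := by
      intro j
      rw [← Finset.sum_smul]
      congr 1
      refine Finset.sum_congr rfl fun k _ => ?_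
      rw [← chi_add]
      congr 1
      ring
    calc ∑ j : ZMod n, ∑ k : ZMod n, (chi (i * k) * chi (-(j * k))) • Z j
        = ∑ j : ZMod n, (∑ k : ZMod n, chi (k * (i - j))) • Z j :=
          Finset.sum_congr rfl fun j _ => h2 j
      _ = (n : ℂ) • Z i := by
          simp only [chi_orth, sub_eq_zero, ite_smul, zero_smul]
          rw [Finset.sum_ite_eq Finset.univ i (fun j => (n : ℂ) • Z j)]
          simp
  rw [h, smul_smul, inv_mul_cancel₀ ncast_ne_zero, one_smul]

noncomputable def cMul {a b c : ℕ} (X : ZMod n → Matrix (Fin a) (Fin b) ℂ)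
    (Y : ZMod n → Matrix (Fin b) (Fin c) ℂ) : ZMod n → Matrix (Fin a) (Fin c) ℂ :=
  fun k => ∑ j : ZMod n, X (k - j) * Y j

noncomputable def cId (n m : ℕ) : ZMod n → Matrix (Fin m) (Fin m) ℂ :=
  fun k => if k = 0 then 1 else 0

lemma Phi_mul {a b c : ℕ} (X : ZMod n → Matrix (Fin a) (Fin b) ℂ)
    (Y : ZMod n → Matrix (Fin b) (Fin c) ℂ) (i : ZMod n) :
    Phi (cMul X Y) i = Phi X i * Phi Y i := by
  rw [Phi, Phi, Phi]
  calc ∑ k : ZMod n, chi (i * k) • cMul X Y k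
      = ∑ k : ZMod n, ∑ j : ZMod n, chi (i * k) • (X (k - j) * Y j) := by
        simp [cMul, Finset.smul_sum]
    _ = ∑ j : ZMod n, ∑ k : ZMod n, chi (i * k) • (X (k - j) * Y j) := Finset.sum_comm
    _ = ∑ j : ZMod n, ∑ k : ZMod n, chi (i * (k + j)) • (X k * Y j) := by
        refine Finset.sum_congr rfl fun j _ => ?_
        refine (Fintype.sum_equiv (Equiv.addRight j) _ _ fun k => ?_).symm
        simp
    _ = ∑ j : ZMod n, ∑ k : ZMod n, (chi (i * k) * chi (i * j)) • (X k * Y j) := by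
        refine Finset.sum_congr rfl fun j _ => Finset.sum_congr rfl fun k _ => ?_
        rw [mul_add, chi_add]
    _ = ∑ k : ZMod n, ∑ j : ZMod n, (chi (i * k) • X k) * (chi (i * j) • Y j) := by
        rw [Finset.sum_comm]
        refine Finset.sum_congr rfl fun j _ => Finset.sum_congr rfl fun k _ => ?_
        simp [Matrix.smul_mul, Matrix.mul_smul, smul_smul, mul_comm]
    _ = (∑ k : ZMod n, chi (i * k) • X k) * ∑ j : ZMod n, chi (i * j) • Y j := by
        rw [Matrix.sum_mul]
        refine Finset.sum_congr rfl fun k _ => ?_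
        rw [Matrix.mul_sum]

lemma Phi_id {m : ℕ} (i : ZMod n) : Phi (cId n m) i = 1 := by
  rw [Phi]
  simp only [cId, smul_ite, smul_zero]
  rw [Finset.sum_ite_eq' Finset.univ (0 : ZMod n) (fun k => chi (i * k) • (1 : Matrix (Fin m) (Fin m) ℂ))]
  simp [chi_zero]


noncomputable def cplx {a b : ℕ} (X : ZMod n → Matrix (Fin a) (Fin b) ℝ) :
    ZMod n → Matrix (Fin a) (Fin b) ℂ :=
  fun k => (X k).map Complex.ofReal

lemma cplx_tMul {a b c : ℕ} (X : ZMod n → Matrix (Fin a) (Fin b) ℝ)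
    (Y : ZMod n → Matrix (Fin b) (Fin c) ℝ) :
    cplx (tMul X Y) = cMul (cplx X) (cplx Y) := by
  funext k
  ext p q
  simp [cplx, tMul, cMul, Matrix.sum_apply, Matrix.mul_apply, Matrix.map_apply]

lemma cplx_tId {m : ℕ} : cplx (tId n m) = cId n m := by
  funext k
  ext p q
  by_cases hk : k = 0 <;>
    simp [cplx, tId, cId, hk, Matrix.map_apply, Matrix.one_apply,
      apply_ite (Complex.ofReal)]

lemma conj_cId {m : ℕ} :
    (fun k => ((cId n m : ZMod n → Matrix (Fin m) (Fin m) ℂ) k).map (starRingEnd ℂ)) = cId n m := by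
  funext k
  ext p q
  by_cases hk : k = 0 <;>
    simp [cId, hk, Matrix.map_apply, Matrix.one_apply, apply_ite (starRingEnd ℂ)]

lemma conj_cMul {a b c : ℕ} (X : ZMod n → Matrix (Fin a) (Fin b) ℂ)
    (Y : ZMod n → Matrix (Fin b) (Fin c) ℂ) :
    (fun k => ((cMul X Y) k).map (starRingEnd ℂ))
      = cMul (fun k => (X k).map (starRingEnd ℂ)) (fun k => (Y k).map (starRingEnd ℂ)) := by
  funext k
  ext p q
  simp [cMul, Matrix.sum_apply, Matrix.mul_apply, Matrix.map_apply]

end TProdAux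


open TProdAux in
/-- Fourier-domain criterion for invertibility under the t-product: a tensor has
a t-product inverse iff every Fourier slice is an invertible complex matrix. -/
theorem tInvertible_iff_fourierSlices_invertible (n m : ℕ) [NeZero n]
    (X : ZMod n → Matrix (Fin m) (Fin m) ℝ) :
    (∃ Y : ZMod n → Matrix (Fin m) (Fin m) ℝ,
        tMul X Y = tId n m ∧ tMul Y X = tId n m) ↔
      ∀ i : ZMod n, IsUnit (fourierSliceR X i) := by
  have fourier_eq : ∀ (W : ZMod n → Matrix (Fin m) (Fin m) ℝ) (i : ZMod n),
      Phi (cplx W) i = fourierSliceR W i := fun W i => rfl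
  constructor
  · rintro ⟨Y, h1, h2⟩ i
    have e1 : fourierSliceR X i * fourierSliceR Y i = 1 := by
      rw [← fourier_eq, ← fourier_eq, ← Phi_mul, ← cplx_tMul, h1, cplx_tId, Phi_id]
    have e2 : fourierSliceR Y i * fourierSliceR X i = 1 := by
      rw [← fourier_eq, ← fourier_eq, ← Phi_mul, ← cplx_tMul, h2, cplx_tId, Phi_id]
    exact ⟨⟨fourierSliceR X i, fourierSliceR Y i, e1, e2⟩, rfl⟩
  · intro h
    set Xc := cplx X with hXc
    let Z : ZMod n → Matrix (Fin m) (Fin m) ℂ := fun i => ((h i).unit⁻¹ : (Matrix (Fin m) (Fin m) ℂ)ˣ)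
    have hZ1 : ∀ i, Phi Xc i * Z i = 1 := by
      intro i
      rw [fourier_eq, ← (h i).unit_spec]
      exact (h i).unit.mul_inv
    have hZ2 : ∀ i, Z i * Phi Xc i = 1 := by
      intro i
      rw [fourier_eq, ← (h i).unit_spec]
      exact (h i).unit.inv_mul
    set Yc := Psi Z with hYcdef
    have hYc : Phi Yc = Z := Phi_Psi Z
    have hXY : cMul Xc Yc = cId n m := by
      have hp : Phi (cMul Xc Yc) = Phi (cId n m) := funext fun i => by
        rw [Phi_mul, congrFun hYc i, hZ1 i, Phi_id]
      have := congrArg Psi hp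
      rwa [Psi_Phi, Psi_Phi] at this
    have hYX : cMul Yc Xc = cId n m := by
      have hp : Phi (cMul Yc Xc) = Phi (cId n m) := funext fun i => by
        rw [Phi_mul, congrFun hYc i, hZ2 i, Phi_id]
      have := congrArg Psi hp
      rwa [Psi_Phi, Psi_Phi] at this
    -- reality of Yc
    set Yc' : ZMod n → Matrix (Fin m) (Fin m) ℂ := fun k => (Yc k).map (starRingEnd ℂ) with hYc'
    have hXconj : (fun k => (Xc k).map (starRingEnd ℂ)) = Xc := by
      funext k
      ext p q
      simp [hXc, cplx, Matrix.map_apply]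
    have hXY' : cMul Xc Yc' = cId n m := by
      have h2 : (fun k => ((cMul Xc Yc) k).map (starRingEnd ℂ))
          = fun k => ((cId n m) k).map (starRingEnd ℂ) := by rw [hXY]
      rw [conj_cMul, hXconj, conj_cId] at h2
      rw [hYc']
      exact h2
    have hYc'Z : ∀ i, Phi Yc' i = Z i := by
      intro i
      have e : Phi Xc i * Phi Yc' i = 1 := by rw [← Phi_mul, hXY', Phi_id]
      calc Phi Yc' i = (Z i * Phi Xc i) * Phi Yc' i := by rw [hZ2 i, Matrix.one_mul]
        _ = Z i * (Phi Xc i * Phi Yc' i) := Matrix.mul_assoc _ _ _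
        _ = Z i := by rw [e, Matrix.mul_one]
    have hconj : Yc' = Yc := by
      have hp : Phi Yc' = Phi Yc := funext fun i => by rw [hYc'Z i, congrFun hYc i]
      have := congrArg Psi hp
      rwa [Psi_Phi, Psi_Phi] at this
    let Y : ZMod n → Matrix (Fin m) (Fin m) ℝ := fun k => (Yc k).map Complex.re
    have hYr : cplx Y = Yc := by
      funext k
      ext p q
      have hk := congrFun hconj k
      have : (starRingEnd ℂ) (Yc k p q) = Yc k p q := by
        have := congrFun (congrFun hk p) q
        simpa [hYc', Matrix.map_apply] using this
      simpa [cplx, Y, Matrix.map_apply] using Complex.conj_eq_iff_re.mp this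
    have hinj : Function.Injective (Complex.ofReal) := Complex.ofReal_injective
    refine ⟨Y, ?_, ?_⟩
    · funext k
      apply Matrix.map_injective hinj
      show cplx (tMul X Y) k = cplx (tId n m) k
      rw [cplx_tMul, hYr, ← hXc, hXY, cplx_tId]
    · funext k
      apply Matrix.map_injective hinj
      show cplx (tMul Y X) k = cplx (tId n m) k
      rw [cplx_tMul, hYr, ← hXc, hYX, cplx_tId]
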